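/- The matrix W_{8−,4} = (−√2, −3/(2√2); 2√2, √2) has determinant 1 and normalizes the group Γ_0^*(8) generated by (1,1;0,1), W_8 = (0, −1/(2√2); 2√2, 0), and (3,1;8,3): W_{8−,4}^{-1} Γ_0^*(8) W_{8−,4} = Γ_0^*(8). -/

import Mathlib

open Matrix

abbrev SL2R := Matrix.SpecialLinearGroup (Fin 2) ℝ

noncomputable def T1 : SL2R := ⟨!![1, 1; 0, 1], by norm_num [Matrix.det_fin_two_of]⟩

noncomputable def W8 : SL2R :=
  ⟨!![0, -1 / (2 * Real.sqrt 2); 2 * Real.sqrt 2, 0], by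
    have h : Real.sqrt 2 ≠ 0 := by positivity
    rw [Matrix.det_fin_two_of, neg_div, neg_mul, div_mul_cancel₀ _ (mul_ne_zero two_ne_zero h)]
    ring⟩

noncomputable def A83 : SL2R := ⟨!![3, 1; 8, 3], by norm_num [Matrix.det_fin_two_of]⟩

/-- `Γ₀^*(8)`: the subgroup of `SL(2,ℝ)` generated by `(1,1;0,1)`, `W₈` and `(3,1;8,3)`
(together with `-I`). -/
noncomputable def Gamma0Star8 : Subgroup SL2R :=
  Subgroup.closure {T1, W8, A83, -1}

/-- The Atkin–Lehner matrix `W_{8-,4}` as an element of `SL(2,ℝ)`. -/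
noncomputable def W84 : SL2R :=
  ⟨!![-Real.sqrt 2, -3 / (2 * Real.sqrt 2); 2 * Real.sqrt 2, Real.sqrt 2], by
    have h2 : Real.sqrt 2 * Real.sqrt 2 = 2 := Real.mul_self_sqrt (by norm_num)
    have h0 : Real.sqrt 2 ≠ 0 := by positivity
    rw [Matrix.det_fin_two_of, neg_div, neg_mul, neg_mul, div_mul_cancel₀ _ (mul_ne_zero two_ne_zero h0)]
    nlinarith [h2]⟩

lemma sqrt2_sq : Real.sqrt 2 * Real.sqrt 2 = 2 := Real.mul_self_sqrt (by norm_num)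
lemma sqrt2_ne : Real.sqrt 2 ≠ 0 := by positivity

noncomputable def T1i : SL2R := ⟨!![1, -1; 0, 1], by norm_num [Matrix.det_fin_two_of]⟩
noncomputable def A83i : SL2R := ⟨!![3, -1; -8, 3], by norm_num [Matrix.det_fin_two_of]⟩

lemma sl_ext (a b : SL2R) (h : (a : Matrix (Fin 2) (Fin 2) ℝ) = b) : a = b := Subtype.ext h

lemma T1_inv : T1⁻¹ = T1i := by
  rw [inv_eq_iff_mul_eq_one]
  apply sl_ext
  simp only [Matrix.SpecialLinearGroup.coe_mul, Matrix.SpecialLinearGroup.coe_neg, Matrix.SpecialLinearGroup.coe_one]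
  simp [T1, T1i, Matrix.mul_fin_two, Matrix.one_fin_two]

lemma A83_inv : A83⁻¹ = A83i := by
  rw [inv_eq_iff_mul_eq_one]
  apply sl_ext
  simp only [Matrix.SpecialLinearGroup.coe_mul, Matrix.SpecialLinearGroup.coe_neg, Matrix.SpecialLinearGroup.coe_one]
  simp [A83, A83i, Matrix.mul_fin_two, Matrix.one_fin_two]
  norm_num

lemma W84_inv : W84⁻¹ = -W84 := by
  rw [inv_eq_iff_mul_eq_one]
  apply sl_ext
  simp only [Matrix.SpecialLinearGroup.coe_mul, Matrix.SpecialLinearGroup.coe_neg, Matrix.SpecialLinearGroup.coe_one]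
  have h2 := sqrt2_sq
  have h0 := sqrt2_ne
  have h3 : Real.sqrt 2 * Real.sqrt 2 * Real.sqrt 2 = 2 * Real.sqrt 2 := by rw [h2]
  have h2' : Real.sqrt 2 ^ 2 = 2 := by rw [sq, h2]
  have h4 : Real.sqrt 2 ^ 3 = 2 * Real.sqrt 2 := by rw [pow_succ, sq, h2]
  have h5 : Real.sqrt 2 ^ 4 = 4 := by rw [show (4:ℕ)=2*2 from rfl, pow_mul, h2']; norm_num
  have h6 : Real.sqrt 2 ^ 5 = 4 * Real.sqrt 2 := by rw [pow_succ, h5]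
  ext i j
  fin_cases i <;> fin_cases j <;>
    simp [W84, Matrix.mul_fin_two, Matrix.one_fin_two] <;> (try field_simp) <;> ring_nf <;> linarith [h2, h2', h3, h4, h5, h6]

lemma conj_T1 : W84⁻¹ * T1 * W84 = (-1) * T1i * A83 := by
  rw [W84_inv]
  apply sl_ext
  simp only [Matrix.SpecialLinearGroup.coe_mul, Matrix.SpecialLinearGroup.coe_neg, Matrix.SpecialLinearGroup.coe_one]
  have h2 := sqrt2_sq
  have h0 := sqrt2_ne
  have h3 : Real.sqrt 2 * Real.sqrt 2 * Real.sqrt 2 = 2 * Real.sqrt 2 := by rw [h2]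
  have h2' : Real.sqrt 2 ^ 2 = 2 := by rw [sq, h2]
  have h4 : Real.sqrt 2 ^ 3 = 2 * Real.sqrt 2 := by rw [pow_succ, sq, h2]
  have h5 : Real.sqrt 2 ^ 4 = 4 := by rw [show (4:ℕ)=2*2 from rfl, pow_mul, h2']; norm_num
  have h6 : Real.sqrt 2 ^ 5 = 4 * Real.sqrt 2 := by rw [pow_succ, h5]
  ext i j
  fin_cases i <;> fin_cases j <;>
    simp [W84, T1, T1i, A83, Matrix.mul_fin_two] <;> (try field_simp) <;> ring_nf <;> linarith [h2, h2', h3, h4, h5, h6]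

lemma conj_W8 : W84⁻¹ * W8 * W84 = T1i * W8 * A83i * T1 := by
  rw [W84_inv]
  apply sl_ext
  simp only [Matrix.SpecialLinearGroup.coe_mul, Matrix.SpecialLinearGroup.coe_neg, Matrix.SpecialLinearGroup.coe_one]
  have h2 := sqrt2_sq
  have h0 := sqrt2_ne
  have h3 : Real.sqrt 2 * Real.sqrt 2 * Real.sqrt 2 = 2 * Real.sqrt 2 := by rw [h2]
  have h2' : Real.sqrt 2 ^ 2 = 2 := by rw [sq, h2]
  have h4 : Real.sqrt 2 ^ 3 = 2 * Real.sqrt 2 := by rw [pow_succ, sq, h2]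
  have h5 : Real.sqrt 2 ^ 4 = 4 := by rw [show (4:ℕ)=2*2 from rfl, pow_mul, h2']; norm_num
  have h6 : Real.sqrt 2 ^ 5 = 4 * Real.sqrt 2 := by rw [pow_succ, h5]
  ext i j
  fin_cases i <;> fin_cases j <;>
    simp [W84, W8, T1, T1i, A83i, Matrix.mul_fin_two] <;> (try field_simp) <;> ring_nf <;> linarith [h2, h2', h3, h4, h5, h6]

lemma conj_A83 : W84⁻¹ * A83 * W84 = T1i * A83 * T1 := by
  rw [W84_inv]
  apply sl_ext
  simp only [Matrix.SpecialLinearGroup.coe_mul, Matrix.SpecialLinearGroup.coe_neg, Matrix.SpecialLinearGroup.coe_one]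
  have h2 := sqrt2_sq
  have h0 := sqrt2_ne
  have h3 : Real.sqrt 2 * Real.sqrt 2 * Real.sqrt 2 = 2 * Real.sqrt 2 := by rw [h2]
  have h2' : Real.sqrt 2 ^ 2 = 2 := by rw [sq, h2]
  have h4 : Real.sqrt 2 ^ 3 = 2 * Real.sqrt 2 := by rw [pow_succ, sq, h2]
  have h5 : Real.sqrt 2 ^ 4 = 4 := by rw [show (4:ℕ)=2*2 from rfl, pow_mul, h2']; norm_num
  have h6 : Real.sqrt 2 ^ 5 = 4 * Real.sqrt 2 := by rw [pow_succ, h5]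
  ext i j
  fin_cases i <;> fin_cases j <;>
    simp [W84, T1, T1i, A83, Matrix.mul_fin_two] <;> (try field_simp) <;> ring_nf <;> linarith [h2, h2', h3, h4, h5, h6]

lemma mem_T1 : T1 ∈ Gamma0Star8 := Subgroup.subset_closure (by simp)
lemma mem_W8 : W8 ∈ Gamma0Star8 := Subgroup.subset_closure (by simp)
lemma mem_A83 : A83 ∈ Gamma0Star8 := Subgroup.subset_closure (by simp)
lemma mem_neg_one : (-1 : SL2R) ∈ Gamma0Star8 := Subgroup.subset_closure (by simp)
lemma mem_T1i : T1i ∈ Gamma0Star8 := T1_inv ▸ inv_mem mem_T1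
lemma mem_A83i : A83i ∈ Gamma0Star8 := A83_inv ▸ inv_mem mem_A83

lemma conj_mem : ∀ g ∈ Gamma0Star8, W84⁻¹ * g * W84 ∈ Gamma0Star8 := by
  intro g hg
  induction hg using Subgroup.closure_induction with
  | mem x hx =>
    rcases hx with h | h | h | h
    · rw [h, conj_T1]; exact mul_mem (mul_mem mem_neg_one mem_T1i) mem_A83
    · rw [h, conj_W8]; exact mul_mem (mul_mem (mul_mem mem_T1i mem_W8) mem_A83i) mem_T1
    · rw [h, conj_A83]; exact mul_mem (mul_mem mem_T1i mem_A83) mem_T1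
    · rw [h]
      have : W84⁻¹ * (-1) * W84 = (-1 : SL2R) := by
        apply sl_ext
        rw [W84_inv]
        simp only [Matrix.SpecialLinearGroup.coe_mul, Matrix.SpecialLinearGroup.coe_neg, Matrix.SpecialLinearGroup.coe_one]
        have h2 := sqrt2_sq
        have h3 : Real.sqrt 2 * Real.sqrt 2 * Real.sqrt 2 = 2 * Real.sqrt 2 := by rw [h2]
        have h2' : Real.sqrt 2 ^ 2 = 2 := by rw [sq, h2]
        have h4 : Real.sqrt 2 ^ 3 = 2 * Real.sqrt 2 := by rw [pow_succ, sq, h2]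
        have h5 : Real.sqrt 2 ^ 4 = 4 := by rw [show (4:ℕ)=2*2 from rfl, pow_mul, h2']; norm_num
        have h6 : Real.sqrt 2 ^ 5 = 4 * Real.sqrt 2 := by rw [pow_succ, h5]
        ext i j
        fin_cases i <;> fin_cases j <;>
          simp [W84, Matrix.mul_fin_two] <;> (try field_simp) <;> ring_nf <;> linarith [h2, h2', h3, h4, h5, h6]
      rw [this]; exact mem_neg_one
  | one => simpa using one_mem Gamma0Star8
  | mul x y _ _ hx hy =>
    have : W84⁻¹ * (x * y) * W84 = (W84⁻¹ * x * W84) * (W84⁻¹ * y * W84) := by group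
    rw [this]; exact mul_mem hx hy
  | inv x _ hx =>
    have : W84⁻¹ * x⁻¹ * W84 = (W84⁻¹ * x * W84)⁻¹ := by group
    rw [this]; exact inv_mem hx

theorem W84_det_and_conj_Gamma0Star8 :
    (W84 : Matrix (Fin 2) (Fin 2) ℝ).det = 1 ∧
      (fun g : SL2R => W84⁻¹ * g * W84) '' (Gamma0Star8 : Set SL2R) =
        (Gamma0Star8 : Set SL2R) := by
  constructor
  · exact W84.2
  · ext g
    constructor
    · rintro ⟨x, hx, rfl⟩
      exact conj_mem x hx
    · intro hg
      refine ⟨W84 * g * W84⁻¹, ?_, by simp [mul_assoc]⟩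
      have key : W84 * g * W84⁻¹ = W84⁻¹ * g * W84 := by
        rw [W84_inv]
        apply sl_ext
        try simp [Matrix.SpecialLinearGroup.coe_mul]
      rw [key]
      exact conj_mem g hg
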